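/- The minimal uniform fill level c* := min{c ≥ 0 : a feasible schedule with max_i p_i ≤ c exists} is attained, and equals max over nonempty interval subsets S of (Σ_{j : J⁻¹(j) ⊆ S} e_j)/(Σ_{i∈S} L_i). -/
import Mathlib

open Finset

namespace MinFill

variable {n m : ℕ}

/-- A valid partial flow: nonneg, supported on `A`, capacity bounds,
column sums at most the demands, row loads at most `c * L i`. -/
def Valid (A : Fin n → Fin m → Bool) (L : Fin m → ℝ) (pmax e : Fin n → ℝ) (c : ℝ)
    (E : Fin m → Fin n → ℝ) : Prop :=
  (∀ i j, 0 ≤ E i j) ∧ (∀ i j, A j i = false → E i j = 0) ∧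
  (∀ i j, E i j ≤ pmax j * L i) ∧ (∀ j, ∑ i, E i j ≤ e j) ∧
  (∀ i, ∑ j, E i j ≤ c * L i)

def total (E : Fin m → Fin n → ℝ) : ℝ := ∑ i, ∑ j, E i j

/-- Augmenting-path reachability of intervals from deficient jobs, with a depth bound. -/
inductive ReachN (A : Fin n → Fin m → Bool) (e : Fin n → ℝ) (E : Fin m → Fin n → ℝ) :
    ℕ → Fin m → Prop
  | base {k : ℕ} {j : Fin n} {i : Fin m} :
      (∑ i', E i' j) < e j → A j i = true → ReachN A e E k i
  | step {k : ℕ} {i' : Fin m} {j : Fin n} {i : Fin m} :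
      ReachN A e E k i' → 0 < E i' j → A j i = true → ReachN A e E (k + 1) i

lemma ReachN.transfer {A : Fin n → Fin m → Bool} {e : Fin n → ℝ}
    {E E' : Fin m → Fin n → ℝ}
    (hcol : ∀ j, (∑ i, E' i j) = ∑ i, E i j)
    (hpos : ∀ i j, 0 < E i j → 0 < E' i j) :
    ∀ {k i}, ReachN A e E k i → ReachN A e E' k i := by
  intro k i h
  induction h with
  | base h1 h2 => exact ReachN.base (by rw [hcol]; exact h1) h2
  | step h1 h2 h3 ih => exact ReachN.step ih (hpos _ _ h2) h3

/-- Add `ε` to the single entry `(i, j)`. -/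
def bump (E : Fin m → Fin n → ℝ) (i : Fin m) (j : Fin n) (ε : ℝ) : Fin m → Fin n → ℝ :=
  fun i' j' => E i' j' + (if i' = i then (if j' = j then ε else 0) else 0)

lemma bump_apply_self (E : Fin m → Fin n → ℝ) (i : Fin m) (j : Fin n) (ε : ℝ) :
    bump E i j ε i j = E i j + ε := by simp [bump]

lemma bump_apply_ne (E : Fin m → Fin n → ℝ) (i : Fin m) (j : Fin n) (ε : ℝ)
    {i' : Fin m} {j' : Fin n} (h : ¬(i' = i ∧ j' = j)) :
    bump E i j ε i' j' = E i' j' := by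
  by_cases h1 : i' = i
  · by_cases h2 : j' = j
    · exact absurd ⟨h1, h2⟩ h
    · simp [bump, h1, h2]
  · simp [bump, h1]

lemma bump_row (E : Fin m → Fin n → ℝ) (i : Fin m) (j : Fin n) (ε : ℝ) (i' : Fin m) :
    ∑ j', bump E i j ε i' j' = (∑ j', E i' j') + (if i' = i then ε else 0) := by
  unfold bump
  rw [Finset.sum_add_distrib]
  congr 1
  by_cases h : i' = i <;> simp [h]

lemma bump_col (E : Fin m → Fin n → ℝ) (i : Fin m) (j : Fin n) (ε : ℝ) (j' : Fin n) :
    ∑ i', bump E i j ε i' j' = (∑ i', E i' j') + (if j' = j then ε else 0) := by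
  unfold bump
  rw [Finset.sum_add_distrib]
  congr 1
  by_cases h : j' = j <;> simp [h]

lemma bump_total (E : Fin m → Fin n → ℝ) (i : Fin m) (j : Fin n) (ε : ℝ) :
    total (bump E i j ε) = total E + ε := by
  unfold total
  simp only [bump_row]
  rw [Finset.sum_add_distrib]
  simp

lemma pair_le_col {E : Fin m → Fin n → ℝ} (hnn : ∀ i j, 0 ≤ E i j)
    {i i' : Fin m} (hne : i ≠ i') (j : Fin n) :
    E i j + E i' j ≤ ∑ i'', E i'' j := by
  have h1 : ∑ x ∈ ({i, i'} : Finset (Fin m)), E x j = E i j + E i' j :=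
    Finset.sum_pair (f := fun x => E x j) hne
  calc E i j + E i' j = ∑ x ∈ ({i, i'} : Finset (Fin m)), E x j := h1.symm
    _ ≤ ∑ x, E x j :=
        Finset.sum_le_sum_of_subset_of_nonneg (subset_univ _) (fun x _ _ => hnn x j)

lemma base_saturated {A : Fin n → Fin m → Bool} {L : Fin m → ℝ} {pmax e : Fin n → ℝ}
    {c : ℝ} (hnb : ∀ j i, A j i = true → e j ≤ pmax j * L i)
    {E : Fin m → Fin n → ℝ} (hV : Valid A L pmax e c E)
    (hmax : ∀ E', Valid A L pmax e c E' → total E' ≤ total E)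
    {j : Fin n} {i : Fin m} (hdef : (∑ i', E i' j) < e j) (hA : A j i = true) :
    ∑ j', E i j' = c * L i := by
  obtain ⟨hnn, hsupp, hpm, hcol, hrow⟩ := hV
  by_contra hne
  have hlt : ∑ j', E i j' < c * L i := lt_of_le_of_ne (hrow i) hne
  set ε := min (e j - ∑ i', E i' j) (c * L i - ∑ j', E i j') with hεdef
  have hε1 : ε ≤ e j - ∑ i', E i' j := min_le_left _ _
  have hε2 : ε ≤ c * L i - ∑ j', E i j' := min_le_right _ _
  have hε0 : 0 < ε := lt_min (by linarith) (by linarith)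
  have hEcol : E i j ≤ ∑ i', E i' j :=
    Finset.single_le_sum (f := fun i' => E i' j) (fun i' _ => hnn i' j) (mem_univ i)
  have hroom : E i j + ε ≤ pmax j * L i := by
    have h := hnb j i hA; linarith
  have hV' : Valid A L pmax e c (bump E i j ε) := by
    refine ⟨?_, ?_, ?_, ?_, ?_⟩
    · intro i' j'
      by_cases h : i' = i ∧ j' = j
      · obtain ⟨rfl, rfl⟩ := h
        rw [bump_apply_self]; linarith [hnn i' j']
      · rw [bump_apply_ne _ _ _ _ h]; exact hnn i' j'
    · intro i' j' hf
      have h : ¬(i' = i ∧ j' = j) := by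
        rintro ⟨rfl, rfl⟩; rw [hA] at hf; exact Bool.noConfusion hf
      rw [bump_apply_ne _ _ _ _ h]; exact hsupp i' j' hf
    · intro i' j'
      by_cases h : i' = i ∧ j' = j
      · obtain ⟨rfl, rfl⟩ := h
        rw [bump_apply_self]; exact hroom
      · rw [bump_apply_ne _ _ _ _ h]; exact hpm i' j'
    · intro j'
      rw [bump_col]
      by_cases h : j' = j
      · subst h; rw [if_pos rfl]; linarith
      · rw [if_neg h, add_zero]; exact hcol j'
    · intro i'
      rw [bump_row]
      by_cases h : i' = i
      · subst h; rw [if_pos rfl]; linarith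
      · rw [if_neg h, add_zero]; exact hrow i'
  have := hmax _ hV'
  rw [bump_total] at this
  linarith

lemma saturated {A : Fin n → Fin m → Bool} {L : Fin m → ℝ} {pmax e : Fin n → ℝ}
    {c : ℝ} (hnb : ∀ j i, A j i = true → e j ≤ pmax j * L i) :
    ∀ (k : ℕ) (E : Fin m → Fin n → ℝ), Valid A L pmax e c E →
      (∀ E', Valid A L pmax e c E' → total E' ≤ total E) →
      ∀ i, ReachN A e E k i → ∑ j, E i j = c * L i := by
  intro k
  induction k with
  | zero =>
    intro E hV hmax i hreach
    cases hreach with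
    | base hdef hA => exact base_saturated hnb hV hmax hdef hA
  | succ k ih =>
    intro E hV hmax i hreach
    cases hreach with
    | base hdef hA => exact base_saturated hnb hV hmax hdef hA
    | @step _ i' j _ hr hpos hA =>
      by_cases hii : i = i'
      · subst hii; exact ih E hV hmax i hr
      · obtain ⟨hnn, hsupp, hpm, hcol, hrow⟩ := hV
        by_contra hne0
        have hlt : ∑ j', E i j' < c * L i := lt_of_le_of_ne (hrow i) hne0
        have hpair : E i j + E i' j ≤ ∑ i'', E i'' j := pair_le_col hnn hii j
        have hEroom : E i j < pmax j * L i := by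
          have h1 := hnb j i hA
          have h2 := hcol j
          linarith
        set ε := (min (min (c * L i - ∑ j', E i j') (E i' j)) (pmax j * L i - E i j)) / 2
          with hεdef
        have hε1 : ε ≤ (c * L i - ∑ j', E i j') / 2 := by
          have h1 := min_le_left (min (c * L i - ∑ j', E i j') (E i' j)) (pmax j * L i - E i j)
          have h2 := min_le_left (c * L i - ∑ j', E i j') (E i' j)
          rw [hεdef]; linarith
        have hε2 : ε ≤ E i' j / 2 := by
          have h1 := min_le_left (min (c * L i - ∑ j', E i j') (E i' j)) (pmax j * L i - E i j)
          have h2 := min_le_right (c * L i - ∑ j', E i j') (E i' j)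
          rw [hεdef]; linarith
        have hε3 : ε ≤ (pmax j * L i - E i j) / 2 := by
          have h1 := min_le_right (min (c * L i - ∑ j', E i j') (E i' j)) (pmax j * L i - E i j)
          rw [hεdef]; linarith
        have hε0 : 0 < ε := by
          rw [hεdef]
          have h1 := lt_min (lt_min (by linarith : (0:ℝ) < c * L i - ∑ j', E i j') hpos)
            (by linarith : (0:ℝ) < pmax j * L i - E i j)
          linarith
        set E'' := bump (bump E i j ε) i' j (-ε) with hE''def
        have hAi' : A j i' = true := by
          cases hAv : A j i' with
          | false => exact absurd (hsupp i' j hAv) (by linarith)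
          | true => rfl
        have happly : ∀ a b, E'' a b =
            E a b + (if a = i ∧ b = j then ε else 0)
              + (if a = i' ∧ b = j then -ε else 0) := by
          intro a b
          rw [hE''def]
          unfold bump
          by_cases hb : b = j
          · by_cases ha : a = i
            · have ha' : ¬ a = i' := fun h => hii (ha.symm.trans h)
              rw [if_pos ha, if_pos hb, if_neg ha', if_pos (And.intro ha hb),
                if_neg (fun hh : a = i' ∧ b = j => ha' hh.1)]
              try ring
            · by_cases ha' : a = i'
              · rw [if_neg ha, if_pos ha', if_pos hb,
                  if_neg (fun hh : a = i ∧ b = j => ha hh.1), if_pos (And.intro ha' hb)]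
                try ring
              · rw [if_neg ha, if_neg ha',
                  if_neg (fun hh : a = i ∧ b = j => ha hh.1),
                  if_neg (fun hh : a = i' ∧ b = j => ha' hh.1)]
                try ring
          · rw [if_neg (fun hh : a = i ∧ b = j => hb hh.2),
              if_neg (fun hh : a = i' ∧ b = j => hb hh.2),
              if_neg hb, if_neg hb]
            try simp only [ite_self]
            try ring
        have hrowE'' : ∀ a, ∑ b, E'' a b =
            (∑ b, E a b) + (if a = i then ε else 0) + (if a = i' then -ε else 0) := by
          intro a
          rw [hE''def, bump_row, bump_row]
        have hcolE'' : ∀ b, ∑ a, E'' a b = ∑ a, E a b := by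
          intro b
          rw [hE''def, bump_col, bump_col]
          by_cases hb : b = j
          · subst hb; rw [if_pos rfl, if_pos rfl]; ring
          · rw [if_neg hb, if_neg hb]; ring
        have htot : total E'' = total E := by
          rw [hE''def, bump_total, bump_total]; ring
        have hV'' : Valid A L pmax e c E'' := by
          refine ⟨?_, ?_, ?_, ?_, ?_⟩
          · intro a b
            rw [happly a b]
            by_cases h1 : a = i ∧ b = j
            · rw [if_pos h1, if_neg (fun h2 : a = i' ∧ b = j => hii (h1.1.symm.trans h2.1))]
              linarith [hnn a b]
            · rw [if_neg h1]
              by_cases h2 : a = i' ∧ b = j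
              · rw [if_pos h2, h2.1, h2.2]
                linarith [hε2, hpos]
              · rw [if_neg h2]
                linarith [hnn a b]
          · intro a b hf
            have h1 : ¬(a = i ∧ b = j) := by
              rintro ⟨rfl, rfl⟩; rw [hA] at hf; exact Bool.noConfusion hf
            have h2 : ¬(a = i' ∧ b = j) := by
              rintro ⟨rfl, rfl⟩; rw [hAi'] at hf; exact Bool.noConfusion hf
            rw [happly a b, if_neg h1, if_neg h2, hsupp a b hf]
            ring
          · intro a b
            rw [happly a b]
            by_cases h1 : a = i ∧ b = j
            · rw [if_pos h1, if_neg (fun h2 : a = i' ∧ b = j => hii (h1.1.symm.trans h2.1)),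
                h1.1, h1.2]
              linarith [hε3]
            · rw [if_neg h1]
              by_cases h2 : a = i' ∧ b = j
              · rw [if_pos h2, h2.1, h2.2]
                linarith [hpm i' j, hε0]
              · rw [if_neg h2]
                linarith [hpm a b]
          · intro b
            rw [hcolE'']; exact hcol b
          · intro a
            rw [hrowE'' a]
            by_cases h1 : a = i
            · rw [if_pos h1, if_neg (fun h2 : a = i' => hii (h1.symm.trans h2)), h1]
              linarith [hε1]
            · rw [if_neg h1]
              by_cases h2 : a = i'
              · rw [if_pos h2, h2]
                linarith [hrow i', hε0]
              · rw [if_neg h2]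
                linarith [hrow a]
        have hmax'' : ∀ E', Valid A L pmax e c E' → total E' ≤ total E'' := by
          intro E' h; rw [htot]; exact hmax E' h
        have hpos'' : ∀ a b, 0 < E a b → 0 < E'' a b := by
          intro a b h
          rw [happly a b]
          by_cases h1 : a = i ∧ b = j
          · rw [if_pos h1, if_neg (fun h2 : a = i' ∧ b = j => hii (h1.1.symm.trans h2.1))]
            linarith
          · rw [if_neg h1]
            by_cases h2 : a = i' ∧ b = j
            · rw [if_pos h2]
              rw [h2.1, h2.2] at h ⊢
              linarith [hε2]
            · rw [if_neg h2]
              linarith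
        have hr'' : ReachN A e E'' k i' := ReachN.transfer hcolE'' hpos'' hr
        have hsat := ih E'' hV'' hmax'' i' hr''
        rw [hrowE'' i'] at hsat
        have h2 : ¬ (i' = i) := fun h => hii h.symm
        rw [if_neg h2, if_pos rfl] at hsat
        have h3 := hrow i'
        linarith

lemma exists_max (A : Fin n → Fin m → Bool) (L : Fin m → ℝ) (pmax e : Fin n → ℝ) (c : ℝ)
    (hc : 0 ≤ c) (hL : ∀ i, 0 < L i) (he : ∀ j, 0 ≤ e j)
    (hpm0 : ∀ j i, 0 ≤ pmax j * L i) :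
    ∃ E, Valid A L pmax e c E ∧ ∀ E', Valid A L pmax e c E' → total E' ≤ total E := by
  classical
  set K : Set (Fin m → Fin n → ℝ) := {E | Valid A L pmax e c E} with hKdef
  have hconts : ∀ i j, Continuous (fun E : Fin m → Fin n → ℝ => E i j) :=
    fun i j => (continuous_apply j).comp (continuous_apply i)
  have hK0 : (0 : Fin m → Fin n → ℝ) ∈ K := by
    refine ⟨fun i j => le_refl 0, fun i j _ => rfl, fun i j => hpm0 j i, ?_, ?_⟩
    · intro j; simpa using he j
    · intro i; simpa using mul_nonneg hc (hL i).le
  have hKeq : K = (⋂ i, ⋂ j, {E : Fin m → Fin n → ℝ | 0 ≤ E i j}) ∩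
      ((⋂ i, ⋂ j, {E : Fin m → Fin n → ℝ | A j i = false → E i j = 0}) ∩
      ((⋂ i, ⋂ j, {E : Fin m → Fin n → ℝ | E i j ≤ pmax j * L i}) ∩
      ((⋂ j, {E : Fin m → Fin n → ℝ | ∑ i, E i j ≤ e j}) ∩
       (⋂ i, {E : Fin m → Fin n → ℝ | ∑ j, E i j ≤ c * L i})))) := by
    ext E
    simp only [hKdef, Set.mem_setOf_eq, Set.mem_inter_iff, Set.mem_iInter, Valid]
  have hclosed : IsClosed K := by
    rw [hKeq]
    refine IsClosed.inter ?_ (IsClosed.inter ?_ (IsClosed.inter ?_ (IsClosed.inter ?_ ?_)))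
    · exact isClosed_iInter fun i => isClosed_iInter fun j =>
        isClosed_le continuous_const (hconts i j)
    · refine isClosed_iInter fun i => isClosed_iInter fun j => ?_
      by_cases hA : A j i = false
      · have : {E : Fin m → Fin n → ℝ | A j i = false → E i j = 0}
            = {E : Fin m → Fin n → ℝ | E i j = 0} := by
          ext E; simp [hA]
        rw [this]
        exact isClosed_eq (hconts i j) continuous_const
      · have : {E : Fin m → Fin n → ℝ | A j i = false → E i j = 0} = Set.univ := by
          ext E; simp [hA]
        rw [this]
        exact isClosed_univ
    · exact isClosed_iInter fun i => isClosed_iInter fun j =>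
        isClosed_le (hconts i j) continuous_const
    · exact isClosed_iInter fun j =>
        isClosed_le (continuous_finset_sum _ fun i _ => hconts i j) continuous_const
    · exact isClosed_iInter fun i =>
        isClosed_le (continuous_finset_sum _ fun j _ => hconts i j) continuous_const
  have hboxc : IsCompact (Set.univ.pi fun i : Fin m =>
      (Set.univ.pi fun j : Fin n => Set.Icc (0:ℝ) (pmax j * L i))) :=
    isCompact_univ_pi fun i => isCompact_univ_pi fun j => isCompact_Icc
  have hsub : K ⊆ Set.univ.pi fun i : Fin m =>
      (Set.univ.pi fun j : Fin n => Set.Icc (0:ℝ) (pmax j * L i)) := by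
    intro E hE
    rw [Set.mem_univ_pi]
    intro i
    rw [Set.mem_univ_pi]
    intro j
    exact ⟨hE.1 i j, hE.2.2.1 i j⟩
  have hKcomp : IsCompact K := hboxc.of_isClosed_subset hclosed hsub
  have hcont : Continuous (total : (Fin m → Fin n → ℝ) → ℝ) :=
    continuous_finset_sum _ fun i _ => continuous_finset_sum _ fun j _ => hconts i j
  obtain ⟨E, hEK, hEmax⟩ := hKcomp.exists_isMaxOn ⟨0, hK0⟩ hcont.continuousOn
  exact ⟨E, hEK, fun E' h => hEmax h⟩

lemma exists_saturating {A : Fin n → Fin m → Bool} {L : Fin m → ℝ} {pmax e : Fin n → ℝ}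
    {c : ℝ} (hc : 0 ≤ c) (hL : ∀ i, 0 < L i) (he : ∀ j, 0 ≤ e j)
    (hnb : ∀ j i, A j i = true → e j ≤ pmax j * L i)
    (havail : ∀ j, ∃ i, A j i = true)
    (hall : ∀ S : Finset (Fin m), S.Nonempty →
      (∑ j ∈ univ.filter (fun j => ∀ i, A j i = true → i ∈ S), e j) ≤ c * ∑ i ∈ S, L i) :
    ∃ E, Valid A L pmax e c E ∧ ∀ j, ∑ i, E i j = e j := by
  classical
  have hpm0 : ∀ j i, 0 ≤ pmax j * L i := by
    intro j i
    obtain ⟨i0, hi0⟩ := havail j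
    have h1 := hnb j i0 hi0
    have h2 := he j
    have hp : 0 ≤ pmax j := by
      by_contra hneg; push_neg at hneg
      have := mul_neg_of_neg_of_pos hneg (hL i0)
      linarith
    exact mul_nonneg hp (hL i).le
  obtain ⟨E, hV, hmax⟩ := exists_max A L pmax e c hc hL he hpm0
  refine ⟨E, hV, ?_⟩
  by_contra hne
  push_neg at hne
  obtain ⟨j0, hj0⟩ := hne
  have hj0lt : ∑ i, E i j0 < e j0 := lt_of_le_of_ne (hV.2.2.2.1 j0) hj0
  set S : Finset (Fin m) := univ.filter (fun i => ∃ k, ReachN A e E k i) with hSdef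
  have hSmem : ∀ i, (∃ k, ReachN A e E k i) → i ∈ S :=
    fun i h => mem_filter.2 ⟨mem_univ i, h⟩
  have hSne : S.Nonempty := by
    obtain ⟨i0, hi0⟩ := havail j0
    exact ⟨i0, hSmem i0 ⟨0, ReachN.base hj0lt hi0⟩⟩
  set T := univ.filter (fun j => ∀ i, A j i = true → i ∈ S) with hTdef
  have hsatS : ∀ i ∈ S, ∑ j, E i j = c * L i := by
    intro i hi
    obtain ⟨k, hk⟩ := (mem_filter.1 hi).2
    exact saturated hnb k E hV hmax i hk
  have hj0T : j0 ∈ T :=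
    mem_filter.2 ⟨mem_univ _, fun i hi => hSmem i ⟨0, ReachN.base hj0lt hi⟩⟩
  have hout : ∀ j, j ∉ T → ∀ i ∈ S, E i j = 0 := by
    intro j hj i hi
    by_contra hne2
    have hpos : 0 < E i j := lt_of_le_of_ne (hV.1 i j) (Ne.symm hne2)
    obtain ⟨k, hk⟩ := (mem_filter.1 hi).2
    exact hj (mem_filter.2 ⟨mem_univ _,
      fun i2 hi2 => hSmem i2 ⟨k + 1, ReachN.step hk hpos hi2⟩⟩)
  have hin : ∀ j ∈ T, ∀ i, i ∉ S → E i j = 0 := by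
    intro j hj i hi
    cases hAv : A j i with
    | false => exact hV.2.1 i j hAv
    | true => exact absurd ((mem_filter.1 hj).2 i hAv) hi
  have key : c * ∑ i ∈ S, L i = ∑ j ∈ T, ∑ i, E i j := by
    calc c * ∑ i ∈ S, L i = ∑ i ∈ S, c * L i := by rw [Finset.mul_sum]
      _ = ∑ i ∈ S, ∑ j, E i j := Finset.sum_congr rfl fun i hi => (hsatS i hi).symm
      _ = ∑ j : Fin n, ∑ i ∈ S, E i j := Finset.sum_comm
      _ = ∑ j ∈ T, ∑ i ∈ S, E i j := by
          refine (Finset.sum_subset (Finset.subset_univ T) ?_).symm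
          intro j _ hj
          exact Finset.sum_eq_zero fun i hi => hout j hj i hi
      _ = ∑ j ∈ T, ∑ i, E i j := by
          refine Finset.sum_congr rfl fun j hj => Finset.sum_subset (Finset.subset_univ S) ?_
          intro i _ hi
          exact hin j hj i hi
  have hlt2 : ∑ j ∈ T, ∑ i, E i j < ∑ j ∈ T, e j :=
    Finset.sum_lt_sum (fun j _ => hV.2.2.2.1 j) ⟨j0, hj0T, hj0lt⟩
  have h5 := hall S hSne
  rw [← hTdef] at h5
  linarith

end MinFill

/-- The minimal uniform fill level is attained and equals the maximum, over
nonempty interval subsets `S`, of the total demand of jobs confined to `S`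
divided by the total length of `S`. -/
theorem minimal_fill_level (n m : ℕ) (hm : 0 < m) (A : Fin n → Fin m → Bool)
    (L : Fin m → ℝ) (pmax e : Fin n → ℝ)
    (hL : ∀ i, 0 < L i) (he : ∀ j, 0 ≤ e j)
    (hnb : ∀ j i, A j i = true → e j ≤ pmax j * L i)
    (havail : ∀ j, ∃ i, A j i = true)
    (hS : (((Finset.univ : Finset (Fin m)).powerset.erase ∅)).Nonempty) :
    IsLeast {c : ℝ | 0 ≤ c ∧ ∃ E : Fin m → Fin n → ℝ,
        (∀ i j, 0 ≤ E i j) ∧ (∀ i j, A j i = false → E i j = 0) ∧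
        (∀ i j, E i j ≤ pmax j * L i) ∧ (∀ j, ∑ i, E i j = e j) ∧
        (∀ i, (∑ j, E i j) / L i ≤ c)}
      (((Finset.univ : Finset (Fin m)).powerset.erase ∅).sup' hS
        (fun S => (∑ j ∈ Finset.univ.filter (fun j => ∀ i, A j i = true → i ∈ S), e j)
          / (∑ i ∈ S, L i))) := by
  classical
  haveI : Nonempty (Fin m) := ⟨⟨0, hm⟩⟩
  set c := (((Finset.univ : Finset (Fin m)).powerset.erase ∅).sup' hS
        (fun S => (∑ j ∈ Finset.univ.filter (fun j => ∀ i, A j i = true → i ∈ S), e j)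
          / (∑ i ∈ S, L i))) with hcdef
  have huniv : (Finset.univ : Finset (Fin m)) ∈
      (Finset.univ : Finset (Fin m)).powerset.erase ∅ := by
    rw [Finset.mem_erase]
    exact ⟨Finset.univ_nonempty.ne_empty, Finset.mem_powerset.2 (Finset.subset_univ _)⟩
  have hratio_le : ∀ S ∈ (Finset.univ : Finset (Fin m)).powerset.erase ∅,
      (∑ j ∈ Finset.univ.filter (fun j => ∀ i, A j i = true → i ∈ S), e j)
        / (∑ i ∈ S, L i) ≤ c := by
    intro S hSm
    rw [hcdef]
    exact Finset.le_sup' (fun S => (∑ j ∈ Finset.univ.filter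
      (fun j => ∀ i, A j i = true → i ∈ S), e j) / (∑ i ∈ S, L i)) hSm
  have hSpos : ∀ S : Finset (Fin m), S.Nonempty → 0 < ∑ i ∈ S, L i :=
    fun S h => Finset.sum_pos (fun i _ => hL i) h
  have hc0 : 0 ≤ c := by
    refine le_trans ?_ (hratio_le Finset.univ huniv)
    exact div_nonneg (Finset.sum_nonneg fun j _ => he j)
      (hSpos Finset.univ Finset.univ_nonempty).le
  have hall : ∀ S : Finset (Fin m), S.Nonempty →
      (∑ j ∈ Finset.univ.filter (fun j => ∀ i, A j i = true → i ∈ S), e j)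
        ≤ c * ∑ i ∈ S, L i := by
    intro S hSne
    have hmemS : S ∈ (Finset.univ : Finset (Fin m)).powerset.erase ∅ := by
      rw [Finset.mem_erase]
      exact ⟨Finset.nonempty_iff_ne_empty.1 hSne, Finset.mem_powerset.2 (Finset.subset_univ _)⟩
    have h1 := hratio_le S hmemS
    rwa [div_le_iff₀ (hSpos S hSne)] at h1
  constructor
  · obtain ⟨E, hV, hcoleq⟩ := MinFill.exists_saturating hc0 hL he hnb havail hall
    refine ⟨hc0, E, hV.1, hV.2.1, hV.2.2.1, hcoleq, ?_⟩
    intro i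
    rw [div_le_iff₀ (hL i)]
    exact hV.2.2.2.2 i
  · rintro x ⟨hx0, E, hnn, hzero, hpm, hcol, hrow⟩
    apply Finset.sup'_le
    intro S hSm
    have hSne : S.Nonempty := Finset.nonempty_iff_ne_empty.2 (Finset.mem_erase.1 hSm).1
    rw [div_le_iff₀ (hSpos S hSne)]
    have hrow' : ∀ i, ∑ j, E i j ≤ x * L i := by
      intro i
      have h1 := hrow i
      rwa [div_le_iff₀ (hL i)] at h1
    calc ∑ j ∈ Finset.univ.filter (fun j => ∀ i, A j i = true → i ∈ S), e j
        = ∑ j ∈ Finset.univ.filter (fun j => ∀ i, A j i = true → i ∈ S), ∑ i, E i j :=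
          Finset.sum_congr rfl fun j _ => (hcol j).symm
      _ = ∑ j ∈ Finset.univ.filter (fun j => ∀ i, A j i = true → i ∈ S), ∑ i ∈ S, E i j := by
          refine Finset.sum_congr rfl fun j hj =>
            (Finset.sum_subset (Finset.subset_univ S) ?_).symm
          intro i _ hi
          cases hAv : A j i with
          | false => exact hzero i j hAv
          | true => exact absurd ((Finset.mem_filter.1 hj).2 i hAv) hi
      _ ≤ ∑ j : Fin n, ∑ i ∈ S, E i j :=
          Finset.sum_le_sum_of_subset_of_nonneg (Finset.filter_subset _ _)
            (fun j _ _ => Finset.sum_nonneg fun i _ => hnn i j)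
      _ = ∑ i ∈ S, ∑ j, E i j := Finset.sum_comm
      _ ≤ ∑ i ∈ S, x * L i := Finset.sum_le_sum fun i _ => hrow' i
      _ = x * ∑ i ∈ S, L i := (Finset.mul_sum _ _ _).symm
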